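/- arXiv:2604.01041 — 2 statements merged into one kernel-verified Lean document; each statement's English description precedes it below -/
import Mathlib

section
/- Fix C ∈ Config_{n,m} and let U = {C′ ∈ Config_{n,m} : C′ ∼ C} be its similarity class. Then the restriction A_φ : U → U is injective if and only if C contains a red cell. -/
/-!
Cellular automata on bounded configurations (Durand / Kapytka setup).

A cell state has components (coord, flag, a, pd, pc, label), each possibly the
undefined value `□` (modelled by `Option`).  Configurations are maps
`ℤ × ℤ → CellState` that are quiescent exactly outside the rectangle
`[n+1] × [m+2]`.  A CNF formula `φ` is given by its clause–literal incidence: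
`φ i j = some true` iff `x_j ∈ C_i`, `some false` iff `¬x_j ∈ C_i`,
`none` iff neither occurs.
-/

namespace CA

structure CellState where
  coord : Option ℤ × Option ℤ
  flag  : Option ℤ
  aval  : Option Bool
  pd    : Option Bool
  pc    : Option Bool
  label : Option Bool
  deriving DecidableEq

/-- The quiescent state `q`: all components are `□`. -/
def qState : CellState := ⟨(none, none), none, none, none, none, none⟩

abbrev Cfg := ℤ × ℤ → CellState

/-- Clause–literal incidence of a CNF formula. -/
abbrev CNF := ℤ → ℤ → Option Bool

/-- The position `p` lies inside the rectangle `[n+1] × [m+2]`. -/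
def inside (n m : ℕ) (p : ℤ × ℤ) : Prop :=
  0 ≤ p.1 ∧ p.1 ≤ (n : ℤ) ∧ 0 ≤ p.2 ∧ p.2 ≤ (m : ℤ) + 1

def rightN (p : ℤ × ℤ) : ℤ × ℤ := (p.1, p.2 + 1)
def leftN  (p : ℤ × ℤ) : ℤ × ℤ := (p.1, p.2 - 1)
def belowN (p : ℤ × ℤ) : ℤ × ℤ := (p.1 + 1, p.2)
def aboveN (p : ℤ × ℤ) : ℤ × ℤ := (p.1 - 1, p.2)

/-- `q` is a von Neumann neighbour of `p`. -/
def vnNbr (p q : ℤ × ℤ) : Prop :=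
  q = rightN p ∨ q = leftN p ∨ q = belowN p ∨ q = aboveN p

/-- The state set `S_{n,m}`: the seven classes (S1)–(S7). -/
def ValidState (n m : ℕ) (s : CellState) : Prop :=
  (∃ l : Bool, s = ⟨(some 0, some 0), none, none, none, none, some l⟩) ∨
  (∃ (i : ℤ) (l : Bool), 1 ≤ i ∧ i ≤ (n : ℤ) ∧
      s = ⟨(some i, some 0), none, none, none, none, some l⟩) ∨
  (∃ (j : ℤ) (a l : Bool), 1 ≤ j ∧ j ≤ (m : ℤ) ∧
      s = ⟨(some 0, some j), none, some a, none, none, some l⟩) ∨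
  (∃ l : Bool, s = ⟨(some 0, some ((m : ℤ) + 1)), none, none, none, none, some l⟩) ∨
  (∃ (i : ℤ) (pc l : Bool), 1 ≤ i ∧ i ≤ (n : ℤ) ∧
      s = ⟨(some i, some ((m : ℤ) + 1)), none, none, none, some pc, some l⟩) ∨
  (∃ (i j fl : ℤ) (a pd l : Bool), 1 ≤ i ∧ i ≤ (n : ℤ) ∧ 1 ≤ j ∧ j ≤ (m : ℤ) ∧
      (fl = -1 ∨ fl = 0 ∨ fl = 1) ∧
      s = ⟨(some i, some j), some fl, some a, some pd, none, some l⟩) ∨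
  s = qState

/-- `C ∈ Config_{n,m}`. -/
def IsConfig (n m : ℕ) (C : Cfg) : Prop :=
  (∀ p, ValidState n m (C p)) ∧
  (∀ p, inside n m p → C p ≠ qState) ∧
  (∀ p, ¬ inside n m p → C p = qState)

/-- The literal of clause `C_i` on variable `x_j` is satisfied by `a`. -/
def litSat (φ : CNF) (a : ℤ → Bool) (i j : ℤ) : Prop :=
  (φ i j = some true ∧ a j = true) ∨ (φ i j = some false ∧ a j = false)

/-- Clause `C_i` is satisfied by the assignment `a`. -/
def clauseSat (φ : CNF) (a : ℤ → Bool) (m : ℕ) (i : ℤ) : Prop :=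
  ∃ j : ℤ, 1 ≤ j ∧ j ≤ (m : ℤ) ∧ litSat φ a i j

/-- The CNF formula `φ` (with `n` clauses, `m` variables) is satisfiable. -/
def Satisfiable (φ : CNF) (n m : ℕ) : Prop :=
  ∃ a : ℤ → Bool, ∀ i : ℤ, 1 ≤ i → i ≤ (n : ℤ) → clauseSat φ a m i

/-- The cell at position `q` behaves correctly for theoretical index `idx`:
if `idx` is inside the rectangle its written coordinates are `idx`,
otherwise the cell is quiescent. -/
def nbrCoordOK (n m : ℕ) (C : Cfg) (q idx : ℤ × ℤ) : Prop :=
  (inside n m idx → (C q).coord = (some idx.1, some idx.2)) ∧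
  (¬ inside n m idx → C q = qState)

/-- (A) Index consistency. -/
def ruleA (n m : ℕ) (C : Cfg) (p : ℤ × ℤ) : Prop :=
  ∀ i j : ℤ, 0 ≤ i → i ≤ (n : ℤ) → 0 ≤ j → j ≤ (m : ℤ) + 1 →
    ((C p).coord = (some i, some j) ↔
      (nbrCoordOK n m C (rightN p) (i, j + 1) ∧
       nbrCoordOK n m C (leftN p) (i, j - 1) ∧
       nbrCoordOK n m C (belowN p) (i + 1, j) ∧
       nbrCoordOK n m C (aboveN p) (i - 1, j)))

/-- (B) Formula consistency. -/
def ruleB (φ : CNF) (n m : ℕ) (C : Cfg) (p : ℤ × ℤ) : Prop :=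
  ∀ i j : ℤ, (C p).coord = (some i, some j) →
    1 ≤ i → i ≤ (n : ℤ) → 1 ≤ j → j ≤ (m : ℤ) →
      (((C p).flag = some 1 ↔ φ i j = some true) ∧
       ((C p).flag = some (-1) ↔ φ i j = some false) ∧
       ((C p).flag = some 0 ↔ φ i j = none))

/-- (C1) the `a`-value is constant along columns `1 ≤ j ≤ m`. -/
def ruleC1 (n m : ℕ) (C : Cfg) (p : ℤ × ℤ) : Prop :=
  ∀ i j : ℤ, (C p).coord = (some i, some j) → 1 ≤ j → j ≤ (m : ℤ) →
    ((inside n m (aboveN p) → (C (aboveN p)).aval = (C p).aval) ∧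
     (inside n m (belowN p) → (C (belowN p)).aval = (C p).aval))

/-- (C2) partial conjunction recurrence for rows `r ≥ 2`. -/
def ruleC2 (n m : ℕ) (C : Cfg) (p : ℤ × ℤ) : Prop :=
  ∀ r : ℤ, (C p).coord = (some r, some ((m : ℤ) + 1)) → 2 ≤ r →
    ((C p).pc = some true ↔
      ((C (aboveN p)).pc = some true ∧ (C (leftN p)).pd = some true))

/-- (C3) partial conjunction base case. -/
def ruleC3 (n m : ℕ) (C : Cfg) (p : ℤ × ℤ) : Prop :=
  (C p).coord = (some 1, some ((m : ℤ) + 1)) →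
    ((C p).pc = some true ↔ (C (leftN p)).pd = some true)

/-- The literal written in the cell is satisfied:
`flag(s) = 1 ∧ a(s) = 1` or `flag(s) = −1 ∧ a(s) = 0`. -/
def litHolds (C : Cfg) (p : ℤ × ℤ) : Prop :=
  ((C p).flag = some 1 ∧ (C p).aval = some true) ∨
  ((C p).flag = some (-1) ∧ (C p).aval = some false)

/-- (D1) partial disjunction recurrence for columns `2 ≤ j ≤ m`. -/
def ruleD1 (n m : ℕ) (C : Cfg) (p : ℤ × ℤ) : Prop :=
  ∀ i j : ℤ, (C p).coord = (some i, some j) →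
    1 ≤ i → i ≤ (n : ℤ) → 2 ≤ j → j ≤ (m : ℤ) →
      ((C p).pd = some true ↔ ((C (leftN p)).pd = some true ∨ litHolds C p))

/-- (D2) partial disjunction base case. -/
def ruleD2 (n m : ℕ) (C : Cfg) (p : ℤ × ℤ) : Prop :=
  ∀ i : ℤ, (C p).coord = (some i, some 1) → 1 ≤ i → i ≤ (n : ℤ) →
    ((C p).pd = some true ↔ litHolds C p)

/-- (E) Technical conditions (E1)–(E4). -/
def ruleE (n m : ℕ) (C : Cfg) (p : ℤ × ℤ) : Prop :=
  ∀ i j : ℤ, (C p).coord = (some i, some j) →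
    (((j = 0 ∨ (i = 0 ∧ j = 0) ∨ (i = 0 ∧ j = (m : ℤ) + 1)) →
        (C p).flag = none ∧ (C p).aval = none ∧ (C p).pd = none ∧ (C p).pc = none) ∧
     ((i = 0 ∧ 1 ≤ j ∧ j ≤ (m : ℤ)) →
        (C p).flag = none ∧ (C p).pd = none ∧ (C p).pc = none) ∧
     ((j = (m : ℤ) + 1 ∧ 1 ≤ i) →
        (C p).flag = none ∧ (C p).aval = none ∧ (C p).pd = none) ∧
     ((1 ≤ i ∧ i ≤ (n : ℤ) ∧ 1 ≤ j ∧ j ≤ (m : ℤ)) → (C p).pc = none))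

/-- The cell of `C` at `p` is locally correct: rules (A)–(E). -/
def LocallyCorrect (φ : CNF) (n m : ℕ) (C : Cfg) (p : ℤ × ℤ) : Prop :=
  ruleA n m C p ∧ ruleB φ n m C p ∧ ruleC1 n m C p ∧ ruleC2 n m C p ∧
  ruleC3 n m C p ∧ ruleD1 n m C p ∧ ruleD2 n m C p ∧ ruleE n m C p

/-- The (non-quiescent) cell of `C` at `p` is blue: it is locally correct and,
if it is an output cell, its `pc` component is `1`.  A cell is red iff it is
not blue. -/
def Blue (φ : CNF) (n m : ℕ) (C : Cfg) (p : ℤ × ℤ) : Prop :=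
  C p ≠ qState ∧ LocallyCorrect φ n m C p ∧
  ((C p).coord = (some (n : ℤ), some ((m : ℤ) + 1)) → (C p).pc = some true)

open scoped Classical in
/-- The snake-like successor map on indices of the rectangle `[n+1] × [m+2]`. -/
noncomputable def suc (n m : ℕ) (p : ℤ × ℤ) : ℤ × ℤ :=
  if p = (0, 0) ∨ (Even p.1 ∧ 1 ≤ p.2 ∧ p.2 ≤ (m : ℤ)) then (p.1, p.2 + 1)
  else if p = ((n : ℤ), 1) ∨ (Odd p.1 ∧ 2 ≤ p.2 ∧ p.2 ≤ (m : ℤ) + 1) then (p.1, p.2 - 1)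
  else if (Odd p.1 ∧ p.2 = 1 ∧ p.1 ≠ (n : ℤ)) ∨ (Even p.1 ∧ p.2 = (m : ℤ) + 1) then
    (p.1 + 1, p.2)
  else (p.1 - 1, p.2)

/-- `q` is the successor cell of `p` in `C`: a von Neumann neighbour whose
written coordinates are `suc` of the written coordinates of `p`. -/
def IsSucc (n m : ℕ) (C : Cfg) (p q : ℤ × ℤ) : Prop :=
  vnNbr p q ∧ ∃ i j : ℤ, (C p).coord = (some i, some j) ∧
    (C q).coord = (some (suc n m (i, j)).1, some (suc n m (i, j)).2)

/-- The position of the successor cell of `p` (the geometric neighbour of `p`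
in the direction from the written coordinates of `p` to their `suc`). -/
noncomputable def succPos (n m : ℕ) (C : Cfg) (p : ℤ × ℤ) : ℤ × ℤ :=
  match (C p).coord with
  | (some i, some j) => (p.1 + ((suc n m (i, j)).1 - i), p.2 + ((suc n m (i, j)).2 - j))
  | _ => p

open scoped Classical in
/-- The global map of the cellular automaton `A_φ`: a blue cell replaces its
label by `label(s₁) XOR label(s_k)` where `s_k` is the state of its successor
cell; a red cell is unchanged. -/
noncomputable def step (φ : CNF) (n m : ℕ) (C : Cfg) : Cfg := fun p =>
  if Blue φ n m C p then
    { C p with label := Option.map₂ Bool.xor ((C p).label) ((C (succPos n m C p)).label) }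
  else C p

/-- `C ∼ C'`: the configurations agree on all state components except
possibly the labels. -/
def Similar (C C' : Cfg) : Prop :=
  ∀ p, (C p).coord = (C' p).coord ∧ (C p).flag = (C' p).flag ∧
    (C p).aval = (C' p).aval ∧ (C p).pd = (C' p).pd ∧ (C p).pc = (C' p).pc

/-- Encoding of clause–literal occurrence as flag value in `{−1, 0, 1}`. -/
def flagInt (o : Option Bool) : ℤ :=
  match o with
  | some true => 1
  | some false => -1
  | none => 0

/-- Truth value under `a` of the disjunction of the literals of `C_i`
among the variables `x₁, …, x_j`. -/
noncomputable def pdVal (φ : CNF) (a : ℤ → Bool) (i j : ℤ) : Bool :=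
  @decide (∃ u : ℤ, 1 ≤ u ∧ u ≤ j ∧ litSat φ a i u) (Classical.propDecidable _)

/-- Truth value under `a` of the partial conjunction `C₁ ∧ … ∧ C_i`. -/
noncomputable def pcVal (φ : CNF) (a : ℤ → Bool) (m : ℕ) (i : ℤ) : Bool :=
  @decide (∀ v : ℤ, 1 ≤ v → v ≤ i → clauseSat φ a m v) (Classical.propDecidable _)

open scoped Classical in
/-- The computation table `Table_φ(a)`, with all labels `0`. -/
noncomputable def Table (φ : CNF) (n m : ℕ) (a : ℤ → Bool) : Cfg := fun p =>
  if inside n m p then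
    { coord := (some p.1, some p.2)
      flag := if 1 ≤ p.1 ∧ p.1 ≤ (n : ℤ) ∧ 1 ≤ p.2 ∧ p.2 ≤ (m : ℤ) then
          some (flagInt (φ p.1 p.2)) else none
      aval := if 1 ≤ p.2 ∧ p.2 ≤ (m : ℤ) then some (a p.2) else none
      pd := if 1 ≤ p.1 ∧ p.1 ≤ (n : ℤ) ∧ 1 ≤ p.2 ∧ p.2 ≤ (m : ℤ) then
          some (pdVal φ a p.1 p.2) else none
      pc := if 1 ≤ p.1 ∧ p.1 ≤ (n : ℤ) ∧ p.2 = (m : ℤ) + 1 then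
          some (pcVal φ a m p.1) else none
      label := some false }
  else qState

end CA
namespace CA

lemma CellState.ext' {s t : CellState} (h1 : s.coord = t.coord) (h2 : s.flag = t.flag)
    (h3 : s.aval = t.aval) (h4 : s.pd = t.pd) (h5 : s.pc = t.pc) (h6 : s.label = t.label) :
    s = t := by cases s; cases t; simp_all

lemma valid_nq {n m : ℕ} {s : CellState} (h : ValidState n m s) (hq : s ≠ qState) :
    ∃ i j : ℤ, ∃ l : Bool, s.coord = (some i, some j) ∧ s.label = some l ∧
      0 ≤ i ∧ i ≤ (n:ℤ) ∧ 0 ≤ j ∧ j ≤ (m:ℤ) + 1 := by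
  rcases h with ⟨l, rfl⟩ | ⟨i, l, h1, h2, rfl⟩ | ⟨j, a, l, h1, h2, rfl⟩ | ⟨l, rfl⟩ |
    ⟨i, pc, l, h1, h2, rfl⟩ | ⟨i, j, fl, a, pd, l, h1, h2, h3, h4, h5, rfl⟩ | rfl
  · exact ⟨0, 0, l, rfl, rfl, by omega⟩
  · exact ⟨i, 0, l, rfl, rfl, by omega⟩
  · exact ⟨0, j, l, rfl, rfl, by omega⟩
  · exact ⟨0, (m:ℤ)+1, l, rfl, rfl, by omega⟩
  · exact ⟨i, (m:ℤ)+1, l, rfl, rfl, by omega⟩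
  · exact ⟨i, j, l, rfl, rfl, by omega⟩
  · exact absurd rfl hq

lemma config_ne_q_iff {n m : ℕ} {C : Cfg} (hC : IsConfig n m C) (p : ℤ × ℤ) :
    C p ≠ qState ↔ inside n m p := by
  by_cases h : inside n m p
  · simp [h, hC.2.1 p h]
  · simp [h, hC.2.2 p h]

lemma suc_cases (n m : ℕ) (p : ℤ × ℤ) :
    suc n m p = (p.1, p.2+1) ∨ suc n m p = (p.1, p.2-1) ∨
    suc n m p = (p.1+1, p.2) ∨ suc n m p = (p.1-1, p.2) := by
  unfold suc; split_ifs <;> simp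

lemma suc_inside {n m : ℕ} (hn : Odd n) (hm : 1 ≤ m) {p : ℤ × ℤ} (h : inside n m p) :
    inside n m (suc n m p) := by
  obtain ⟨t, ht⟩ := hn
  unfold suc inside at *
  split_ifs with hA hB hC <;>
    simp only [Int.even_iff, Int.odd_iff, Prod.ext_iff, Prod.fst, Prod.snd,
      not_or, not_and] at * <;> omega

end CA
namespace CA

/-- Snake order of the rectangle. -/
def ord (n m : ℕ) (p : ℤ × ℤ) : ℤ :=
  if p.2 = 0 then (if p.1 = 0 then 0 else ((n:ℤ)+1)*((m:ℤ)+1) + ((n:ℤ)+1-p.1))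
  else if p.1 % 2 = 0 then p.1*((m:ℤ)+1)+p.2 else p.1*((m:ℤ)+1)+((m:ℤ)+2-p.2)

lemma band_inj {M a b r s : ℤ} (hM : 1 ≤ M) (hr : 1 ≤ r) (hr2 : r ≤ M) (hs : 1 ≤ s)
    (hs2 : s ≤ M) (h : a*M + r = b*M + s) : a = b ∧ r = s := by
  have hab : a = b := by
    by_contra hne
    rcases lt_or_gt_of_ne hne with hlt | hlt
    · have h1 : (0:ℤ) ≤ (b - a - 1) * M := mul_nonneg (by omega) (by omega)
      nlinarith
    · have h1 : (0:ℤ) ≤ (a - b - 1) * M := mul_nonneg (by omega) (by omega)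
      nlinarith
  subst hab
  exact ⟨rfl, by linarith⟩

lemma ord_bounds {n m : ℕ} {p : ℤ × ℤ} (h : inside n m p) :
    0 ≤ ord n m p ∧ ord n m p < ((n:ℤ)+1)*((m:ℤ)+2) := by
  obtain ⟨h1, h2, h3, h4⟩ := h
  have hA : p.1 * ((m:ℤ)+1) ≤ (n:ℤ) * ((m:ℤ)+1) :=
    mul_le_mul_of_nonneg_right h2 (by positivity)
  have hB : (0:ℤ) ≤ p.1 * ((m:ℤ)+1) := mul_nonneg h1 (by positivity)
  unfold ord
  split_ifs <;> (try have e1 : 1 ≤ p.2 := by omega) <;> (try have e0 : 1 ≤ p.1 := by omega) <;> constructor <;> nlinarith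

lemma ord_inj {n m : ℕ} {p q : ℤ × ℤ} (hp : inside n m p) (hq : inside n m q)
    (h : ord n m p = ord n m q) : p = q := by
  obtain ⟨hp1, hp2, hp3, hp4⟩ := hp
  obtain ⟨hq1, hq2, hq3, hq4⟩ := hq
  have hA : p.1 * ((m:ℤ)+1) ≤ (n:ℤ) * ((m:ℤ)+1) :=
    mul_le_mul_of_nonneg_right hp2 (by positivity)
  have hB : (0:ℤ) ≤ p.1 * ((m:ℤ)+1) := mul_nonneg hp1 (by positivity)
  have hA' : q.1 * ((m:ℤ)+1) ≤ (n:ℤ) * ((m:ℤ)+1) :=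
    mul_le_mul_of_nonneg_right hq2 (by positivity)
  have hB' : (0:ℤ) ≤ q.1 * ((m:ℤ)+1) := mul_nonneg hq1 (by positivity)
  have hext : p.1 = q.1 ∧ p.2 = q.2 → p = q := fun ⟨a, b⟩ => Prod.ext a b
  unfold ord at h
  split_ifs at h with c1 c2 c3 c4 c5 c6 c7 c8 c9
  -- p in j=0,i=0 branch or not; q similarly; then band branches
  all_goals (apply hext)
  · omega
  · exfalso
    (try have e1 : 1 ≤ p.2 := by omega)
    (try have e2 : 1 ≤ q.2 := by omega)
    nlinarith
  · exfalso
    (try have e1 : 1 ≤ p.2 := by omega)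
    (try have e2 : 1 ≤ q.2 := by omega)
    nlinarith
  · exfalso
    (try have e1 : 1 ≤ p.2 := by omega)
    (try have e2 : 1 ≤ q.2 := by omega)
    nlinarith
  · exfalso
    (try have e1 : 1 ≤ p.2 := by omega)
    (try have e2 : 1 ≤ q.2 := by omega)
    nlinarith
  · omega
  · exfalso
    (try have e1 : 1 ≤ p.2 := by omega)
    (try have e2 : 1 ≤ q.2 := by omega)
    nlinarith
  · exfalso
    (try have e1 : 1 ≤ p.2 := by omega)
    (try have e2 : 1 ≤ q.2 := by omega)
    nlinarith
  · exfalso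
    (try have e1 : 1 ≤ p.2 := by omega)
    (try have e2 : 1 ≤ q.2 := by omega)
    nlinarith
  · exfalso
    (try have e1 : 1 ≤ p.2 := by omega)
    (try have e2 : 1 ≤ q.2 := by omega)
    nlinarith
  · -- both even bands
    have := band_inj (M := (m:ℤ)+1) (by omega) (by omega) (by omega) (by omega) (by omega) h
    omega
  · -- p even band, q odd band
    have := band_inj (M := (m:ℤ)+1) (by omega) (by omega) (by omega) (by omega) (by omega) h
    omega
  · exfalso
    (try have e1 : 1 ≤ p.2 := by omega)
    (try have e2 : 1 ≤ q.2 := by omega)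
    nlinarith
  · exfalso
    (try have e1 : 1 ≤ p.2 := by omega)
    (try have e2 : 1 ≤ q.2 := by omega)
    nlinarith
  · have := band_inj (M := (m:ℤ)+1) (by omega) (by omega) (by omega) (by omega) (by omega) h
    omega
  · have := band_inj (M := (m:ℤ)+1) (by omega) (by omega) (by omega) (by omega) (by omega) h
    omega

end CA
namespace CA

lemma ord_q1 (n m : ℕ) {i j : ℤ} (hj : j = 0) (hi : i = 0) : ord n m (i, j) = 0 := by
  subst hj hi; simp [ord]

lemma ord_q2 (n m : ℕ) {i j : ℤ} (hj : j = 0) (hi : i ≠ 0) :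
    ord n m (i, j) = ((n:ℤ)+1)*((m:ℤ)+1) + ((n:ℤ)+1-i) := by
  subst hj; simp [ord, hi]

lemma ord_q3 (n m : ℕ) {i j : ℤ} (hj : j ≠ 0) (hi : i % 2 = 0) :
    ord n m (i, j) = i*((m:ℤ)+1)+j := by
  simp [ord, hj, hi]

lemma ord_q4 (n m : ℕ) {i j : ℤ} (hj : j ≠ 0) (hi : i % 2 = 1) :
    ord n m (i, j) = i*((m:ℤ)+1)+((m:ℤ)+2-j) := by
  have h : ¬ (i % 2 = 0) := by omega
  simp [ord, hj, h]

lemma ord_suc_aux {n m : ℕ} (hn : Odd n) (hm : 1 ≤ m) {p : ℤ × ℤ} (hin : inside n m p)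
    (hw : p ≠ (1,0)) : ord n m (suc n m p) = ord n m p + 1 := by
  obtain ⟨t, ht⟩ := hn
  obtain ⟨h1, h2, h3, h4⟩ := hin
  have hw' : ¬(p.1 = 1 ∧ p.2 = 0) := by
    intro hx; exact hw (Prod.ext hx.1 hx.2)
  conv_rhs => rw [← Prod.mk.eta (p := p)]
  unfold suc
  split_ifs with hA hB hC
  · rcases hA with hA | ⟨he, hj1, hj2⟩
    · have e1 : p.1 = 0 := by rw [hA]
      have e2 : p.2 = 0 := by rw [hA]
      rw [ord_q3 n m (by omega) (by omega), ord_q1 n m e2 e1, e1, e2]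
      ring
    · have he' : p.1 % 2 = 0 := Int.even_iff.mp he
      rw [ord_q3 n m (by omega) he', ord_q3 n m (by omega) he']
      ring
  · rcases hB with hB | ⟨ho, hj1, hj2⟩
    · have e1 : p.1 = (n:ℤ) := by rw [hB]
      have e2 : p.2 = 1 := by rw [hB]
      rw [ord_q2 n m (by omega) (by omega), ord_q4 n m (by omega) (by omega), e1, e2]
      ring
    · have ho' : p.1 % 2 = 1 := Int.odd_iff.mp ho
      rw [ord_q4 n m (by omega) ho', ord_q4 n m (by omega) ho']
      ring
  · rcases hC with ⟨ho, hj, hne⟩ | ⟨he, hj⟩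
    · have ho' : p.1 % 2 = 1 := Int.odd_iff.mp ho
      rw [ord_q3 n m (by omega) (by omega), ord_q4 n m (by omega) ho', hj]
      ring
    · have he' : p.1 % 2 = 0 := Int.even_iff.mp he
      rw [ord_q4 n m (by omega) (by omega), ord_q3 n m (by omega) he', hj]
      ring
  · simp only [Prod.ext_iff, Int.even_iff, Int.odd_iff, not_or, not_and] at hA hB hC
    have e2 : p.2 = 0 := by omega
    have e1 : 2 ≤ p.1 := by omega
    rw [ord_q2 n m e2 (by omega), ord_q2 n m e2 (by omega)]
    ring

lemma ord_suc {n m : ℕ} (hn : Odd n) (hm : 1 ≤ m) {p : ℤ × ℤ} (hin : inside n m p) :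
    ord n m (suc n m p) = (ord n m p + 1) % (((n:ℤ)+1)*((m:ℤ)+2)) := by
  have hbp := ord_bounds hin
  have hbs := ord_bounds (suc_inside hn hm hin)
  by_cases hw : p = (1, 0)
  · subst hw
    have hsuc : suc n m (1, 0) = ((0:ℤ), (0:ℤ)) := by
      unfold suc
      rw [if_neg, if_neg, if_neg]
      · norm_num
      all_goals simp only [Prod.ext_iff, Int.even_iff, Int.odd_iff, not_or, not_and]
      all_goals omega
    rw [hsuc, ord_q1 n m rfl rfl, ord_q2 n m rfl (by omega),
      show ((n:ℤ)+1)*((m:ℤ)+1) + ((n:ℤ)+1-1) + 1 = ((n:ℤ)+1)*((m:ℤ)+2) by ring,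
      Int.emod_self]
  · have key := ord_suc_aux hn hm hin hw
    rw [key, Int.emod_eq_of_lt (by linarith [hbp.1]) (by rw [← key]; exact hbs.2)]

end CA
namespace CA

lemma blue_congr {φ : CNF} {n m : ℕ} {C C' : Cfg} (hs : Similar C C')
    (hq : ∀ q, C q = qState ↔ C' q = qState) (p : ℤ × ℤ) :
    Blue φ n m C p ↔ Blue φ n m C' p := by
  have h1 : ∀ q, (C q).coord = (C' q).coord := fun q => (hs q).1
  have h2 : ∀ q, (C q).flag = (C' q).flag := fun q => (hs q).2.1
  have h3 : ∀ q, (C q).aval = (C' q).aval := fun q => (hs q).2.2.1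
  have h4 : ∀ q, (C q).pd = (C' q).pd := fun q => (hs q).2.2.2.1
  have h5 : ∀ q, (C q).pc = (C' q).pc := fun q => (hs q).2.2.2.2
  simp only [Blue, LocallyCorrect, ruleA, ruleB, ruleC1, ruleC2, ruleC3, ruleD1,
    ruleD2, ruleE, nbrCoordOK, litHolds, ne_eq, h1, h2, h3, h4, h5, hq]

lemma succPos_congr {n m : ℕ} {C C' : Cfg} (h : ∀ q, (C q).coord = (C' q).coord)
    (p : ℤ × ℤ) : succPos n m C p = succPos n m C' p := by
  unfold succPos; rw [h p]

lemma similar_trans {C₁ C₂ C₃ : Cfg} (h1 : Similar C₁ C₂) (h2 : Similar C₂ C₃) :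
    Similar C₁ C₃ := by
  intro p
  obtain ⟨a1, a2, a3, a4, a5⟩ := h1 p
  obtain ⟨b1, b2, b3, b4, b5⟩ := h2 p
  exact ⟨a1.trans b1, a2.trans b2, a3.trans b3, a4.trans b4, a5.trans b5⟩

lemma similar_symm {C₁ C₂ : Cfg} (h1 : Similar C₁ C₂) : Similar C₂ C₁ := by
  intro p
  obtain ⟨a1, a2, a3, a4, a5⟩ := h1 p
  exact ⟨a1.symm, a2.symm, a3.symm, a4.symm, a5.symm⟩

lemma similar_refl (C : Cfg) : Similar C C := fun _ => ⟨rfl, rfl, rfl, rfl, rfl⟩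

noncomputable def rectF (n m : ℕ) : Finset (ℤ × ℤ) :=
  Finset.Icc (0:ℤ) (n:ℤ) ×ˢ Finset.Icc (0:ℤ) ((m:ℤ)+1)

lemma mem_rectF {n m : ℕ} {p : ℤ × ℤ} : p ∈ rectF n m ↔ inside n m p := by
  simp only [rectF, Finset.mem_product, Finset.mem_Icc, inside]
  tauto

lemma card_rectF (n m : ℕ) : (rectF n m).card = (n+1) * (m+2) := by
  rw [rectF, Finset.card_product, Int.card_Icc, Int.card_Icc]
  have e1 : ((n:ℤ) + 1 - 0).toNat = n + 1 := by omega
  have e2 : ((m:ℤ) + 1 + 1 - 0).toNat = m + 2 := by omega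
  rw [e1, e2]

end CA
namespace CA

lemma blue_succ {φ : CNF} {n m : ℕ} {C : Cfg} (hC : IsConfig n m C) (hn : Odd n)
    (hm : 1 ≤ m) {p : ℤ × ℤ} (hB : Blue φ n m C p)
    {i j : ℤ} (hco : (C p).coord = (some i, some j)) (hij : inside n m (i, j)) :
    inside n m (succPos n m C p) ∧
      (C (succPos n m C p)).coord =
        (some (suc n m (i,j)).1, some (suc n m (i,j)).2) := by
  obtain ⟨b1, b2, b3, b4⟩ := hij
  obtain ⟨hR, hL, hD, hU⟩ := (hB.2.1.1 i j b1 b2 b3 b4).mp hco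
  have hσ : succPos n m C p =
      (p.1 + ((suc n m (i,j)).1 - i), p.2 + ((suc n m (i,j)).2 - j)) := by
    unfold succPos; rw [hco]
  have hs_in : inside n m (suc n m (i, j)) := suc_inside hn hm ⟨b1, b2, b3, b4⟩
  have hcoord : (C (succPos n m C p)).coord =
      (some (suc n m (i,j)).1, some (suc n m (i,j)).2) := by
    rcases suc_cases n m (i, j) with hc | hc | hc | hc
    · have hpos : succPos n m C p = rightN p := by
        rw [hσ, hc]
        show (p.1 + (i - i), p.2 + (j + 1 - j)) = (p.1, p.2 + 1)
        simp only [Prod.mk.injEq]; constructor <;> ring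
      rw [hpos, hc]
      exact hR.1 (hc ▸ hs_in)
    · have hpos : succPos n m C p = leftN p := by
        rw [hσ, hc]
        show (p.1 + (i - i), p.2 + (j - 1 - j)) = (p.1, p.2 - 1)
        simp only [Prod.mk.injEq]; constructor <;> ring
      rw [hpos, hc]
      exact hL.1 (hc ▸ hs_in)
    · have hpos : succPos n m C p = belowN p := by
        rw [hσ, hc]
        show (p.1 + (i + 1 - i), p.2 + (j - j)) = (p.1 + 1, p.2)
        simp only [Prod.mk.injEq]; constructor <;> ring
      rw [hpos, hc]
      exact hD.1 (hc ▸ hs_in)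
    · have hpos : succPos n m C p = aboveN p := by
        rw [hσ, hc]
        show (p.1 + (i - 1 - i), p.2 + (j - j)) = (p.1 - 1, p.2)
        simp only [Prod.mk.injEq]; constructor <;> ring
      rw [hpos, hc]
      exact hU.1 (hc ▸ hs_in)
  refine ⟨?_, hcoord⟩
  by_contra hout
  rw [hC.2.2 _ hout] at hcoord
  simp [qState] at hcoord

lemma dvd_small {N a : ℤ} (hN : 0 < N) (h : N ∣ a) (h1 : -N < a) (h2 : a < N) :
    a = 0 := by
  obtain ⟨k, rfl⟩ := h
  rcases lt_trichotomy k 0 with hk | hk | hk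
  · nlinarith
  · simp [hk]
  · nlinarith

end CA
open CA in
/-- Fix `C ∈ Config_{n,m}` and let `U` be its similarity class.
Then the restriction `A_φ : U → U` is injective iff `C` contains a red cell. -/
theorem stmt_1 (n m : ℕ) (hn : 1 ≤ n) (hnodd : Odd n) (hm : 1 ≤ m) (φ : CNF)
    (C : Cfg) (hC : IsConfig n m C) :
    (∀ C₁ C₂ : Cfg, IsConfig n m C₁ → IsConfig n m C₂ →
        Similar C₁ C → Similar C₂ C →
        step φ n m C₁ = step φ n m C₂ → C₁ = C₂) ↔
      (∃ p : ℤ × ℤ, inside n m p ∧ ¬ Blue φ n m C p) := by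
  constructor
  · -- injectivity → there is a red cell
    intro hinj
    by_contra hred
    push_neg at hred
    set C' : Cfg := fun p => { C p with label := Option.map not ((C p).label) }
      with hC'def
    have hsim : Similar C' C := fun p => ⟨rfl, rfl, rfl, rfl, rfl⟩
    have hconf' : IsConfig n m C' := by
      refine ⟨?_, ?_, ?_⟩
      · intro p
        rcases hC.1 p with ⟨l, h⟩ | ⟨i, l, h1, h2, h⟩ | ⟨j, a, l, h1, h2, h⟩ | ⟨l, h⟩ |
          ⟨i, pc, l, h1, h2, h⟩ | ⟨i, j, fl, a, pd, l, h1, h2, h3, h4, h5, h⟩ | h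
        · exact Or.inl ⟨!l, by simp [hC'def, h]⟩
        · exact Or.inr (Or.inl ⟨i, !l, h1, h2, by simp [hC'def, h]⟩)
        · exact Or.inr (Or.inr (Or.inl ⟨j, a, !l, h1, h2, by simp [hC'def, h]⟩))
        · exact Or.inr (Or.inr (Or.inr (Or.inl ⟨!l, by simp [hC'def, h]⟩)))
        · exact Or.inr (Or.inr (Or.inr (Or.inr (Or.inl
            ⟨i, pc, !l, h1, h2, by simp [hC'def, h]⟩))))
        · exact Or.inr (Or.inr (Or.inr (Or.inr (Or.inr (Or.inl
            ⟨i, j, fl, a, pd, !l, h1, h2, h3, h4, h5, by simp [hC'def, h]⟩)))))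
        · exact Or.inr (Or.inr (Or.inr (Or.inr (Or.inr (Or.inr
            (by simp [hC'def, h, qState]))))))
      · intro p hp heq
        obtain ⟨i, j, l, hco, _, _⟩ := valid_nq (hC.1 p) (hC.2.1 p hp)
        have : (C' p).coord = (some i, some j) := hco
        rw [heq] at this
        simp [qState] at this
      · intro p hp
        rw [show C' p = { C p with label := Option.map not ((C p).label) } from rfl,
          hC.2.2 p hp]
        rfl
    have hqiff : ∀ q, C' q = qState ↔ C q = qState := by
      intro q
      by_cases h : inside n m q
      · simp [hconf'.2.1 q h, hC.2.1 q h]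
      · simp [hconf'.2.2 q h, hC.2.2 q h]
    have hblue : ∀ p, Blue φ n m C' p ↔ Blue φ n m C p :=
      blue_congr hsim hqiff
    have hσ : ∀ p, succPos n m C' p = succPos n m C p :=
      succPos_congr (fun q => rfl)
    have hstepeq : step φ n m C' = step φ n m C := by
      funext p
      by_cases hin : inside n m p
      · have hB : Blue φ n m C p := hred p hin
        have hB' : Blue φ n m C' p := (hblue p).mpr hB
        simp only [step, if_pos hB, if_pos hB', hσ p]
        refine CellState.ext' rfl rfl rfl rfl rfl ?_
        show Option.map₂ xor (Option.map not ((C p).label))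
            (Option.map not ((C (succPos n m C p)).label)) =
          Option.map₂ xor ((C p).label) ((C (succPos n m C p)).label)
        rcases (C p).label with _ | a <;> rcases (C (succPos n m C p)).label with _ | b <;>
          first
          | rfl
          | (cases a <;> cases b <;> rfl)
      · have h1 : C p = qState := hC.2.2 p hin
        have h1' : C' p = qState := hconf'.2.2 p hin
        have hB : ¬ Blue φ n m C p := fun hB => hB.1 h1
        have hB' : ¬ Blue φ n m C' p := fun hB => hB.1 h1'
        simp only [step, if_neg hB, if_neg hB', h1, h1']
    have hfin : C' = C := hinj C' C hconf' hC hsim (similar_refl C) hstepeq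
    have hin00 : inside n m ((0:ℤ), (0:ℤ)) := by
      refine ⟨le_refl _, ?_, le_refl _, ?_⟩ <;> positivity
    obtain ⟨i, j, l, hco, hla, _⟩ := valid_nq (hC.1 (0,0)) (hC.2.1 _ hin00)
    have := congrArg CellState.label (congrFun hfin ((0:ℤ), (0:ℤ)))
    rw [show (C' ((0:ℤ),(0:ℤ))).label = Option.map not ((C ((0:ℤ),(0:ℤ))).label) from rfl,
      hla] at this
    cases l <;> simp at this
  · -- red cell → injectivity
    rintro ⟨p₀, hp₀in, hp₀red⟩ C₁ C₂ hc1 hc2 hs1 hs2 hstep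
    have hs12 : Similar C₁ C₂ := similar_trans hs1 (similar_symm hs2)
    have hq12 : ∀ q, C₁ q = qState ↔ C₂ q = qState := by
      intro q
      by_cases h : inside n m q
      · simp [hc1.2.1 q h, hc2.2.1 q h]
      · simp [hc1.2.2 q h, hc2.2.2 q h]
    have hq1C : ∀ q, C₁ q = qState ↔ C q = qState := by
      intro q
      by_cases h : inside n m q
      · simp [hc1.2.1 q h, hC.2.1 q h]
      · simp [hc1.2.2 q h, hC.2.2 q h]
    have hblue12 : ∀ q, Blue φ n m C₁ q ↔ Blue φ n m C₂ q := blue_congr hs12 hq12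
    have hblue1C : ∀ q, Blue φ n m C₁ q ↔ Blue φ n m C q := blue_congr hs1 hq1C
    have hσeq : ∀ q, succPos n m C₂ q = succPos n m C₁ q :=
      succPos_congr (fun r => ((hs12 r).1).symm)
    have main : ∀ q, inside n m q → (C₁ q).label = (C₂ q).label := by
      by_contra hcon
      push_neg at hcon
      obtain ⟨p, hpin, hpne⟩ := hcon
      have key : ∀ q, inside n m q → (C₁ q).label ≠ (C₂ q).label →
          Blue φ n m C₁ q ∧ inside n m (succPos n m C₁ q) ∧
          (C₁ (succPos n m C₁ q)).label ≠ (C₂ (succPos n m C₁ q)).label ∧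
          ∀ i j : ℤ, (C₁ q).coord = (some i, some j) →
            (C₁ (succPos n m C₁ q)).coord =
              (some (suc n m (i,j)).1, some (suc n m (i,j)).2) := by
        intro q hqin hqne
        obtain ⟨i, j, l₁, hco1, hla1, b1, b2, b3, b4⟩ := valid_nq (hc1.1 q) (hc1.2.1 q hqin)
        have hB1 : Blue φ n m C₁ q := by
          by_contra hB
          have hB2 : ¬ Blue φ n m C₂ q := fun h => hB ((hblue12 q).mpr h)
          have hsq := congrFun hstep q
          simp only [step, if_neg hB, if_neg hB2] at hsq
          exact hqne (by rw [hsq])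
        have hB2 : Blue φ n m C₂ q := (hblue12 q).mp hB1
        obtain ⟨hσin, hσco⟩ := blue_succ hc1 hnodd hm hB1 hco1 ⟨b1, b2, b3, b4⟩
        obtain ⟨i2, j2, l₂, hco2, hla2, _⟩ := valid_nq (hc2.1 q) (hc2.2.1 q hqin)
        obtain ⟨i3, j3, l₁', hco1', hla1', _⟩ := valid_nq (hc1.1 _) (hc1.2.1 _ hσin)
        obtain ⟨i4, j4, l₂', hco2', hla2', _⟩ := valid_nq (hc2.1 _) (hc2.2.1 _ hσin)
        have hstepq := congrFun hstep q
        simp only [step, if_pos hB1, if_pos hB2, hσeq q] at hstepq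
        have hlab := congrArg CellState.label hstepq
        dsimp only at hlab
        rw [hla1, hla2, hla1', hla2'] at hlab
        have hx : xor l₁ l₁' = xor l₂ l₂' := by
          exact Option.some.inj hlab
        have hl12 : l₁ ≠ l₂ := by
          rw [hla1, hla2] at hqne
          simpa using hqne
        refine ⟨hB1, hσin, ?_, ?_⟩
        · rw [hla1', hla2']
          intro heq
          have hll : l₁' = l₂' := by simpa using heq
          apply hl12
          rw [← hll] at hx
          revert hx
          cases l₁ <;> cases l₂ <;> cases l₁' <;> decide
        · intro i0 j0 hco0
          have hij : i = i0 ∧ j = j0 := by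
            have := hco1.symm.trans hco0
            simpa using this
          rw [← hij.1, ← hij.2]
          exact hσco
      have chain : ∀ t : ℕ, inside n m ((succPos n m C₁)^[t] p) ∧
          (C₁ ((succPos n m C₁)^[t] p)).label ≠ (C₂ ((succPos n m C₁)^[t] p)).label := by
        intro t
        induction t with
        | zero => exact ⟨hpin, hpne⟩
        | succ t ih =>
          have k := key _ ih.1 ih.2
          rw [Function.iterate_succ_apply']
          exact ⟨k.2.1, k.2.2.1⟩
      obtain ⟨i₀, j₀, l₀, hco₀, _, c1, c2, c3, c4⟩ := valid_nq (hc1.1 p) (hc1.2.1 p hpin)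
      have coords : ∀ t : ℕ, (C₁ ((succPos n m C₁)^[t] p)).coord =
          (some ((suc n m)^[t] (i₀, j₀)).1, some ((suc n m)^[t] (i₀, j₀)).2) := by
        intro t
        induction t with
        | zero => simpa using hco₀
        | succ t ih =>
          have k := key _ (chain t).1 (chain t).2
          have h2 := k.2.2.2 _ _ ih
          rw [Function.iterate_succ_apply', Function.iterate_succ_apply']
          simpa [Prod.mk.eta] using h2
      have sucIn : ∀ t : ℕ, inside n m ((suc n m)^[t] (i₀, j₀)) := by
        intro t
        induction t with
        | zero => exact ⟨c1, c2, c3, c4⟩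
        | succ t ih =>
          rw [Function.iterate_succ_apply']
          exact suc_inside hnodd hm ih
      have hN2 : (1:ℤ) < ((n:ℤ)+1)*((m:ℤ)+2) := by
        have h1 : (1:ℤ) ≤ (n:ℤ) := by exact_mod_cast hn
        have h2 : (1:ℤ) ≤ (m:ℤ) := by exact_mod_cast hm
        nlinarith
      have ordIt : ∀ t : ℕ, ord n m ((suc n m)^[t] (i₀, j₀)) =
          (ord n m (i₀, j₀) + t) % (((n:ℤ)+1)*((m:ℤ)+2)) := by
        intro t
        induction t with
        | zero =>
          have hin0 : inside n m (i₀, j₀) := ⟨c1, c2, c3, c4⟩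
          have hb := ord_bounds hin0
          simpa using (Int.emod_eq_of_lt hb.1 hb.2).symm
        | succ t ih =>
          rw [Function.iterate_succ_apply', ord_suc hnodd hm (sucIn t), ih,
            Int.emod_add_emod]
          congr 1
          push_cast
          ring
      have hNN : (((n+1) * (m+2) : ℕ) : ℤ) = ((n:ℤ)+1)*((m:ℤ)+2) := by push_cast; ring
      have hinj' : Set.InjOn (fun t : ℕ => (succPos n m C₁)^[t] p)
          ↑(Finset.range ((n+1)*(m+2))) := by
        intro a ha b hb hab
        simp only [Finset.coe_range, Set.mem_Iio] at ha hb
        have h1 := coords a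
        have h2 := coords b
        simp only at hab
        rw [hab] at h1
        have hco : (suc n m)^[a] (i₀,j₀) = (suc n m)^[b] (i₀,j₀) := by
          have h3 := h1.symm.trans h2
          simp only [Prod.mk.injEq, Option.some.injEq] at h3
          exact Prod.ext h3.1 h3.2
        have h4 : (ord n m (i₀,j₀) + (a:ℤ)) % (((n:ℤ)+1)*((m:ℤ)+2)) =
            (ord n m (i₀,j₀) + (b:ℤ)) % (((n:ℤ)+1)*((m:ℤ)+2)) := by
          rw [← ordIt a, ← ordIt b, hco]
        have h5 : (((n:ℤ)+1)*((m:ℤ)+2)) ∣ ((a:ℤ) - (b:ℤ)) := by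
          have h6 := Int.emod_eq_emod_iff_emod_sub_eq_zero.mp h4
          rw [show ord n m (i₀,j₀) + (a:ℤ) - (ord n m (i₀,j₀) + (b:ℤ)) = (a:ℤ) - b
            from by ring] at h6
          exact Int.dvd_of_emod_eq_zero h6
        have ha' : (a:ℤ) < ((n:ℤ)+1)*((m:ℤ)+2) := by rw [← hNN]; exact_mod_cast ha
        have hb' : (b:ℤ) < ((n:ℤ)+1)*((m:ℤ)+2) := by rw [← hNN]; exact_mod_cast hb
        have ha0 : (0:ℤ) ≤ (a:ℤ) := Int.natCast_nonneg a
        have hb0 : (0:ℤ) ≤ (b:ℤ) := Int.natCast_nonneg b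
        have h7 : ((a:ℤ) - b) = 0 :=
          dvd_small (by linarith) h5 (by linarith) (by linarith)
        omega
      have himg : Finset.image (fun t : ℕ => (succPos n m C₁)^[t] p)
          (Finset.range ((n+1)*(m+2))) = rectF n m := by
        apply Finset.eq_of_subset_of_card_le
        · intro x hx
          simp only [Finset.mem_image] at hx
          obtain ⟨t, _, rfl⟩ := hx
          exact mem_rectF.mpr (chain t).1
        · rw [Finset.card_image_of_injOn hinj', Finset.card_range, card_rectF]
      have hp₀mem : p₀ ∈ Finset.image (fun t : ℕ => (succPos n m C₁)^[t] p)
          (Finset.range ((n+1)*(m+2))) := by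
        rw [himg]; exact mem_rectF.mpr hp₀in
      simp only [Finset.mem_image] at hp₀mem
      obtain ⟨t, _, ht⟩ := hp₀mem
      have hBp₀ : Blue φ n m C₁ p₀ := by
        rw [← ht]
        exact (key _ (chain t).1 (chain t).2).1
      exact hp₀red ((hblue1C p₀).mp hBp₀)
    funext q
    by_cases hin : inside n m q
    · obtain ⟨a1, a2, a3, a4, a5⟩ := hs12 q
      exact CellState.ext' a1 a2 a3 a4 a5 (main q hin)
    · rw [hc1.2.2 q hin, hc2.2.2 q hin]
end

section
/- Let a = (a₁,…,a_m) ∈ {0,1}^m be an assignment and let C ∈ Config_{n,m} satisfy C ∼ Table_φ(a). Then every cell of C inside [n+1]×[m+2] is locally correct; in particular, Table_φ(a) is locally correct. -/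
/-!
Cellular automata on bounded configurations (Durand / Kapytka setup).

A cell state has components (coord, flag, a, pd, pc, label), each possibly the
undefined value `□` (modelled by `Option`).  Configurations are maps
`ℤ × ℤ → CellState` that are quiescent exactly outside the rectangle
`[n+1] × [m+2]`.  A CNF formula `φ` is given by its clause–literal incidence:
`φ i j = some true` iff `x_j ∈ C_i`, `some false` iff `¬x_j ∈ C_i`,
`none` iff neither occurs.
-/

namespace CA

section Aux

variable {n m : ℕ} {φ : CNF} {a : ℤ → Bool} {C : Cfg}

lemma table_eq (hp : inside n m p) : Table φ n m a p =
    { coord := (some p.1, some p.2)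
      flag := if 1 ≤ p.1 ∧ p.1 ≤ (n : ℤ) ∧ 1 ≤ p.2 ∧ p.2 ≤ (m : ℤ) then
          some (flagInt (φ p.1 p.2)) else none
      aval := if 1 ≤ p.2 ∧ p.2 ≤ (m : ℤ) then some (a p.2) else none
      pd := if 1 ≤ p.1 ∧ p.1 ≤ (n : ℤ) ∧ 1 ≤ p.2 ∧ p.2 ≤ (m : ℤ) then
          some (pdVal φ a p.1 p.2) else none
      pc := if 1 ≤ p.1 ∧ p.1 ≤ (n : ℤ) ∧ p.2 = (m : ℤ) + 1 then
          some (pcVal φ a m p.1) else none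
      label := some false } := by
  simp [Table, hp]

lemma sim_coord (hsim : Similar C (Table φ n m a)) {p : ℤ × ℤ} (hp : inside n m p) :
    (C p).coord = (some p.1, some p.2) := by
  rw [(hsim p).1, table_eq hp]

lemma sim_flag (hsim : Similar C (Table φ n m a)) {p : ℤ × ℤ} (hp : inside n m p) :
    (C p).flag = if 1 ≤ p.1 ∧ p.1 ≤ (n : ℤ) ∧ 1 ≤ p.2 ∧ p.2 ≤ (m : ℤ) then
          some (flagInt (φ p.1 p.2)) else none := by
  rw [(hsim p).2.1, table_eq hp]

lemma sim_aval (hsim : Similar C (Table φ n m a)) {p : ℤ × ℤ} (hp : inside n m p) :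
    (C p).aval = if 1 ≤ p.2 ∧ p.2 ≤ (m : ℤ) then some (a p.2) else none := by
  rw [(hsim p).2.2.1, table_eq hp]

lemma sim_pd (hsim : Similar C (Table φ n m a)) {p : ℤ × ℤ} (hp : inside n m p) :
    (C p).pd = if 1 ≤ p.1 ∧ p.1 ≤ (n : ℤ) ∧ 1 ≤ p.2 ∧ p.2 ≤ (m : ℤ) then
          some (pdVal φ a p.1 p.2) else none := by
  rw [(hsim p).2.2.2.1, table_eq hp]

lemma sim_pc (hsim : Similar C (Table φ n m a)) {p : ℤ × ℤ} (hp : inside n m p) :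
    (C p).pc = if 1 ≤ p.1 ∧ p.1 ≤ (n : ℤ) ∧ p.2 = (m : ℤ) + 1 then
          some (pcVal φ a m p.1) else none := by
  rw [(hsim p).2.2.2.2, table_eq hp]

lemma pdVal_one : pdVal φ a i 1 = true ↔ litSat φ a i 1 := by
  simp only [pdVal, decide_eq_true_eq]
  constructor
  · rintro ⟨u, h1, h2, h3⟩
    have : u = 1 := le_antisymm h2 h1
    subst this; exact h3
  · intro h; exact ⟨1, le_refl _, le_refl _, h⟩

lemma pdVal_succ {j : ℤ} (hj : 2 ≤ j) :
    pdVal φ a i j = true ↔ pdVal φ a i (j - 1) = true ∨ litSat φ a i j := by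
  simp only [pdVal, decide_eq_true_eq]
  constructor
  · rintro ⟨u, h1, h2, h3⟩
    by_cases hu : u = j
    · subst hu; right; exact h3
    · left; exact ⟨u, h1, by omega, h3⟩
  · rintro (⟨u, h1, h2, h3⟩ | h)
    · exact ⟨u, h1, by omega, h3⟩
    · exact ⟨j, by omega, le_refl _, h⟩

lemma pdVal_clause : pdVal φ a i (m : ℤ) = true ↔ clauseSat φ a m i := by
  simp only [pdVal, decide_eq_true_eq]; rfl

lemma pcVal_one : pcVal φ a m 1 = true ↔ clauseSat φ a m 1 := by
  simp only [pcVal, decide_eq_true_eq]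
  constructor
  · intro h; exact h 1 le_rfl le_rfl
  · intro h v h1 h2
    have : v = 1 := le_antisymm h2 h1
    subst this; exact h

lemma pcVal_succ {r : ℤ} (hr : 2 ≤ r) :
    pcVal φ a m r = true ↔ pcVal φ a m (r - 1) = true ∧ clauseSat φ a m r := by
  simp only [pcVal, decide_eq_true_eq]
  constructor
  · intro h
    exact ⟨fun v h1 h2 => h v h1 (by omega), h r (by omega) le_rfl⟩
  · rintro ⟨h1, h2⟩ v hv1 hv2
    by_cases hv : v = r
    · subst hv; exact h2
    · exact h1 v hv1 (by omega)

lemma flagInt_iffs (o : Option Bool) :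
    (some (flagInt o) = some 1 ↔ o = some true) ∧
    (some (flagInt o) = some (-1) ↔ o = some false) ∧
    (some (flagInt o) = some 0 ↔ o = none) := by
  rcases o with _ | _ | _ <;> simp [flagInt] <;> omega

lemma litHolds_iff (hsim : Similar C (Table φ n m a)) {p : ℤ × ℤ} (hp : inside n m p)
    (h1 : 1 ≤ p.1) (h2 : p.1 ≤ (n : ℤ)) (h3 : 1 ≤ p.2) (h4 : p.2 ≤ (m : ℤ)) :
    litHolds C p ↔ litSat φ a p.1 p.2 := by
  rw [litHolds, litSat, sim_flag hsim hp, sim_aval hsim hp,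
    if_pos ⟨h1, h2, h3, h4⟩, if_pos ⟨h3, h4⟩]
  obtain ⟨g1, g2, _⟩ := flagInt_iffs (φ p.1 p.2)
  rw [g1, g2]
  simp

lemma nbr_ok (hC : IsConfig n m C) (hsim : Similar C (Table φ n m a)) (q : ℤ × ℤ) :
    nbrCoordOK n m C q q := by
  constructor
  · intro h; exact sim_coord hsim h
  · intro h; exact hC.2.2 q h

lemma main_lc (hm : 1 ≤ m) (hC : IsConfig n m C)
    (hsim : Similar C (Table φ n m a)) :
    ∀ p : ℤ × ℤ, inside n m p → LocallyCorrect φ n m C p := by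
  intro p hp
  have hcoord := sim_coord hsim hp
  obtain ⟨hp1, hp2, hp3, hp4⟩ := hp
  have hp' : inside n m p := ⟨hp1, hp2, hp3, hp4⟩
  refine ⟨?_, ?_, ?_, ?_, ?_, ?_, ?_, ?_⟩
  · -- ruleA
    intro i j hi0 hin hj0 hjm
    rw [hcoord]
    constructor
    · intro h
      have hi : p.1 = i := by simpa using congrArg (fun x => x.1) h
      have hj : p.2 = j := by
        have := congrArg (fun x => x.2) h
        simpa using this
      subst hi; subst hj
      exact ⟨nbr_ok hC hsim _, nbr_ok hC hsim _, nbr_ok hC hsim _, nbr_ok hC hsim _⟩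
    · rintro ⟨hr, hl, _, _⟩
      by_cases hin1 : inside n m (i, j + 1)
      · have h := hr.1 hin1
        by_cases hin2 : inside n m (rightN p)
        · rw [sim_coord hsim hin2] at h
          simp only [rightN, Prod.mk.injEq, Option.some.injEq] at h
          have : p.1 = i ∧ p.2 = j := by omega
          simp [this.1, this.2]
        · rw [hC.2.2 _ hin2] at h
          simp [qState] at h
      · have hj' : j = (m : ℤ) + 1 := by
          simp only [inside, not_and, not_le] at hin1
          omega
        have hin3 : inside n m (i, j - 1) := by
          refine ⟨hi0, hin, by omega, by omega⟩
        have h := hl.1 hin3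
        by_cases hin2 : inside n m (leftN p)
        · rw [sim_coord hsim hin2] at h
          simp only [leftN, Prod.mk.injEq, Option.some.injEq] at h
          have : p.1 = i ∧ p.2 = j := by omega
          simp [this.1, this.2]
        · rw [hC.2.2 _ hin2] at h
          simp [qState] at h
  · -- ruleB
    intro i j hc h1 h2 h3 h4
    rw [hcoord] at hc
    have hi : p.1 = i ∧ p.2 = j := by
      simpa [Prod.ext_iff] using hc
    obtain ⟨hi1, hi2⟩ := hi
    rw [sim_flag hsim hp', if_pos ⟨by omega, by omega, by omega, by omega⟩, hi1, hi2]
    exact flagInt_iffs (φ i j)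
  · -- ruleC1
    intro i j hc h3 h4
    rw [hcoord] at hc
    have hj : p.2 = j := by
      have : p.1 = i ∧ p.2 = j := by simpa [Prod.ext_iff] using hc
      exact this.2
    constructor
    · intro hab
      rw [sim_aval hsim hab, sim_aval hsim hp']
      simp only [aboveN]
      rfl
    · intro hbe
      rw [sim_aval hsim hbe, sim_aval hsim hp']
      simp only [belowN]
      rfl
  · -- ruleC2
    intro r hc hr
    rw [hcoord] at hc
    have hi : p.1 = r ∧ p.2 = (m : ℤ) + 1 := by simpa [Prod.ext_iff] using hc
    obtain ⟨hi1, hi2⟩ := hi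
    have hab : inside n m (aboveN p) := ⟨by simp [aboveN]; omega, by simp [aboveN]; omega,
      by simp [aboveN]; omega, by simp [aboveN]; omega⟩
    have hle : inside n m (leftN p) := ⟨by simp [leftN]; omega, by simp [leftN]; omega,
      by simp [leftN]; omega, by simp [leftN]; omega⟩
    rw [sim_pc hsim hp', show aboveN p = (p.1 - 1, p.2) from rfl, show leftN p = (p.1, p.2 - 1) from rfl, sim_pc (p := (p.1 - 1, p.2)) hsim hab, sim_pd (p := (p.1, p.2 - 1)) hsim hle]
    simp only [aboveN, leftN]
    rw [if_pos ⟨by omega, by omega, by omega⟩, if_pos ⟨by omega, by omega, by omega⟩,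
      if_pos ⟨by omega, by omega, by omega, by omega⟩]
    simp only [Option.some.injEq]
    have hpm : p.2 - 1 = (m : ℤ) := by omega
    rw [hi1, hpm, pcVal_succ hr, pdVal_clause]
  · -- ruleC3
    intro hc
    rw [hcoord] at hc
    have hi : p.1 = 1 ∧ p.2 = (m : ℤ) + 1 := by simpa [Prod.ext_iff] using hc
    obtain ⟨hi1, hi2⟩ := hi
    have hle : inside n m (leftN p) := ⟨by simp [leftN]; omega, by simp [leftN]; omega,
      by simp [leftN]; omega, by simp [leftN]; omega⟩
    rw [sim_pc hsim hp', show leftN p = (p.1, p.2 - 1) from rfl, sim_pd (p := (p.1, p.2 - 1)) hsim hle]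
    simp only [leftN]
    rw [if_pos ⟨by omega, by omega, by omega⟩,
      if_pos ⟨by omega, by omega, by omega, by omega⟩]
    simp only [Option.some.injEq]
    have hpm : p.2 - 1 = (m : ℤ) := by omega
    rw [hi1, hpm, pcVal_one, pdVal_clause]
  · -- ruleD1
    intro i j hc h1 h2 h3 h4
    rw [hcoord] at hc
    have hi : p.1 = i ∧ p.2 = j := by simpa [Prod.ext_iff] using hc
    obtain ⟨hi1, hi2⟩ := hi
    have hle : inside n m (leftN p) := ⟨by simp [leftN]; omega, by simp [leftN]; omega,
      by simp [leftN]; omega, by simp [leftN]; omega⟩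
    rw [sim_pd hsim hp', show leftN p = (p.1, p.2 - 1) from rfl, sim_pd (p := (p.1, p.2 - 1)) hsim hle,
      litHolds_iff hsim hp' (by omega) (by omega) (by omega) (by omega)]
    simp only [leftN]
    rw [if_pos ⟨by omega, by omega, by omega, by omega⟩,
      if_pos ⟨by omega, by omega, by omega, by omega⟩]
    simp only [Option.some.injEq]
    rw [hi1, hi2, pdVal_succ h3]
  · -- ruleD2
    intro i hc h1 h2
    rw [hcoord] at hc
    have hi : p.1 = i ∧ p.2 = 1 := by simpa [Prod.ext_iff] using hc
    obtain ⟨hi1, hi2⟩ := hi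
    rw [sim_pd hsim hp',
      litHolds_iff hsim hp' (by omega) (by omega) (by omega) (by omega)]
    rw [if_pos ⟨by omega, by omega, by omega, by omega⟩]
    simp only [Option.some.injEq]
    rw [hi1, hi2, pdVal_one]
  · -- ruleE
    intro i j hc
    rw [hcoord] at hc
    have hi : p.1 = i ∧ p.2 = j := by simpa [Prod.ext_iff] using hc
    obtain ⟨hi1, hi2⟩ := hi
    refine ⟨?_, ?_, ?_, ?_⟩
    · rintro (h | h | h) <;>
      · refine ⟨?_, ?_, ?_, ?_⟩ <;>
        first
        | (rw [sim_flag hsim hp', if_neg (by omega)])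
        | (rw [sim_aval hsim hp', if_neg (by omega)])
        | (rw [sim_pd hsim hp', if_neg (by omega)])
        | (rw [sim_pc hsim hp', if_neg (by omega)])
    · rintro ⟨h1, h2, h3⟩
      refine ⟨?_, ?_, ?_⟩
      · rw [sim_flag hsim hp', if_neg (by omega)]
      · rw [sim_pd hsim hp', if_neg (by omega)]
      · rw [sim_pc hsim hp', if_neg (by omega)]
    · rintro ⟨h1, h2⟩
      refine ⟨?_, ?_, ?_⟩
      · rw [sim_flag hsim hp', if_neg (by omega)]
      · rw [sim_aval hsim hp', if_neg (by omega)]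
      · rw [sim_pd hsim hp', if_neg (by omega)]
    · rintro ⟨h1, h2, h3, h4⟩
      rw [sim_pc hsim hp', if_neg (by omega)]

lemma table_isConfig (hm : 1 ≤ m) (φ : CNF) (a : ℤ → Bool) :
    IsConfig n m (Table φ n m a) := by
  refine ⟨?_, ?_, ?_⟩
  · intro p
    by_cases hp : inside n m p
    · rw [table_eq hp]
      obtain ⟨h1, h2, h3, h4⟩ := hp
      rcases eq_or_lt_of_le h1 with h1' | h1'
      · -- p.1 = 0
        rcases eq_or_lt_of_le h3 with h3' | h3'
        · -- j = 0 : S1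
          left
          exact ⟨false, by rw [if_neg (by omega), if_neg (by omega), if_neg (by omega),
            if_neg (by omega), ← h1', ← h3']⟩
        · by_cases h4' : p.2 ≤ (m : ℤ)
          · -- S3
            right; right; left
            exact ⟨p.2, a p.2, false, by omega, h4', by
              rw [if_neg (by omega), if_pos ⟨by omega, h4'⟩, if_neg (by omega),
                if_neg (by omega), ← h1']⟩
          · -- j = m+1 : S4
            right; right; right; left
            refine ⟨false, ?_⟩
            have : p.2 = (m : ℤ) + 1 := by omega
            rw [if_neg (by omega), if_neg (by omega), if_neg (by omega),
              if_neg (by omega), ← h1', this]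
      · -- 1 ≤ p.1
        rcases eq_or_lt_of_le h3 with h3' | h3'
        · -- j = 0 : S2
          right; left
          exact ⟨p.1, false, h1', h2, by
            rw [if_neg (by omega), if_neg (by omega), if_neg (by omega),
              if_neg (by omega), ← h3']⟩
        · by_cases h4' : p.2 ≤ (m : ℤ)
          · -- S6
            right; right; right; right; right; left
            refine ⟨p.1, p.2, flagInt (φ p.1 p.2), a p.2, pdVal φ a p.1 p.2, false,
              h1', h2, by omega, h4', ?_, ?_⟩
            · rcases φ p.1 p.2 with _ | _ | _ <;> simp [flagInt]
            · rw [if_pos ⟨h1', h2, by omega, h4'⟩, if_pos ⟨by omega, h4'⟩,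
                if_pos ⟨h1', h2, by omega, h4'⟩, if_neg (by omega)]
          · -- j = m+1 : S5
            right; right; right; right; left
            refine ⟨p.1, pcVal φ a m p.1, false, h1', h2, ?_⟩
            have hj : p.2 = (m : ℤ) + 1 := by omega
            rw [if_neg (by omega), if_neg (by omega), if_neg (by omega),
              if_pos ⟨h1', h2, hj⟩, hj]
    · right; right; right; right; right; right
      simp [Table, hp]
  · intro p hp heq
    rw [table_eq hp] at heq
    have := congrArg CellState.label heq
    simp [qState] at this
  · intro p hp
    simp [Table, hp]

end Aux

end CA

open CA in
/-- If `C ∼ Table_φ(a)` then every cell of `C` inside the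
rectangle is locally correct; in particular `Table_φ(a)` is locally correct. -/
theorem stmt_2 (n m : ℕ) (hn : 1 ≤ n) (hnodd : Odd n) (hm : 1 ≤ m) (φ : CNF)
    (a : ℤ → Bool) (C : Cfg) (hC : IsConfig n m C)
    (hsim : Similar C (Table φ n m a)) :
    (∀ p : ℤ × ℤ, inside n m p → LocallyCorrect φ n m C p) ∧
    (∀ p : ℤ × ℤ, inside n m p → LocallyCorrect φ n m (Table φ n m a) p) := by
  refine ⟨main_lc hm hC hsim, ?_⟩
  exact main_lc hm (table_isConfig hm φ a)
    (fun p => ⟨rfl, rfl, rfl, rfl, rfl⟩)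
end
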